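/- If T' is obtained from a tree T by deleting a set of leaves, then b(T) ≤ b(T') + 1; more generally, if T is a subtree of a tree S with V(T) ⊆ V(S) and distances in S restricted to V(T) equal distances in T, then b(T) ≤ b(S). -/

import Mathlib

open SimpleGraph

/-- `x` is a burning sequence for `G`: every vertex is within distance `k - i`
of the source `x i` burned in round `i` (0-indexed: `k - 1 - i`). -/
def IsBurningSeq {V : Type*} (G : SimpleGraph V) {k : ℕ} (x : Fin k → V) : Prop :=
  ∀ v : V, ∃ i : Fin k, G.dist v (x i) ≤ k - 1 - (i : ℕ)

/-- The burning number of `G`. -/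
noncomputable def burnNum {V : Type*} (G : SimpleGraph V) : ℕ :=
  sInf {k : ℕ | ∃ x : Fin k → V, IsBurningSeq G x}

section Aux

variable {V : Type*} {W : Type*}

/-- In a path, `getVert` is injective on `[0, length]`. -/
lemma getVert_injOn_aux {G : SimpleGraph V} :
    ∀ {u v : V} (p : G.Walk u v), p.IsPath → ∀ i j, i ≤ p.length → j ≤ p.length →
      p.getVert i = p.getVert j → i = j := by
  intro u v p
  induction p with
  | nil => intro _ i j hi hj _; simp at hi hj; omega
  | cons h q ih =>
    intro hp i j hi hj hij
    rcases SimpleGraph.Walk.cons_isPath_iff _ _ |>.mp hp with ⟨hq, hu⟩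
    match i, j with
    | 0, 0 => rfl
    | 0, (j+1) =>
      exfalso
      apply hu
      rw [SimpleGraph.Walk.mem_support_iff_exists_getVert]
      refine ⟨j, ?_, by simpa using hj⟩
      rw [← SimpleGraph.Walk.getVert_cons_succ q h, ← hij, SimpleGraph.Walk.getVert_zero]
    | (i+1), 0 =>
      exfalso
      apply hu
      rw [SimpleGraph.Walk.mem_support_iff_exists_getVert]
      refine ⟨i, ?_, by simpa using hi⟩
      rw [← SimpleGraph.Walk.getVert_cons_succ q h, hij, SimpleGraph.Walk.getVert_zero]
    | (i+1), (j+1) =>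
      have := ih hq i j (by simpa using hi) (by simpa using hj)
        (by simpa [SimpleGraph.Walk.getVert_cons_succ] using hij)
      omega

lemma tree_length_eq_dist {G : SimpleGraph V} (hG : G.IsTree) {u v : V}
    (p : G.Walk u v) (hp : p.IsPath) : p.length = G.dist u v := by
  obtain ⟨q, hq, hlen⟩ := hG.isConnected.exists_path_of_dist u v
  obtain ⟨r, _, hu⟩ := hG.existsUnique_path u v
  rw [hu p hp, ← hu q hq]; exact hlen

lemma burn_set_nonempty [Fintype V] [Nonempty V] (G : SimpleGraph V) :
    {k : ℕ | ∃ x : Fin k → V, IsBurningSeq G x}.Nonempty := by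
  refine ⟨Fintype.card V, fun i => (Fintype.equivFin V).symm i, fun v => ?_⟩
  exact ⟨Fintype.equivFin V v, by simp [SimpleGraph.dist_self]⟩

/-- convexity of the image of an isometric tree embedding -/
lemma convex_range {T : SimpleGraph V} {S : SimpleGraph W} (hT : T.IsTree) (hS : S.IsTree)
    (g : T →g S) (hg : ∀ u w : V, S.dist (g u) (g w) = T.dist u w) {u w : V}
    (p : S.Walk (g u) (g w)) (hp : p.IsPath) : ∀ c ∈ p.support, c ∈ Set.range g := by
  obtain ⟨q, hq, hlen⟩ := hT.isConnected.exists_path_of_dist u w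
  have h1 : (q.map g).length = S.dist (g u) (g w) := by
    rw [SimpleGraph.Walk.length_map, hlen, hg]
  have h2 : (q.map g).IsPath := SimpleGraph.Walk.isPath_of_length_eq_dist _ h1
  obtain ⟨r, _, hu⟩ := hS.existsUnique_path (g u) (g w)
  have hpq : p = q.map g := (hu p hp).trans (hu _ h2).symm
  intro c hc
  rw [hpq, SimpleGraph.Walk.support_map] at hc
  obtain ⟨a, _, rfl⟩ := List.mem_map.mp hc
  exact ⟨a, rfl⟩

lemma getVert_one_takeUntil [DecidableEq W] {S : SimpleGraph W} {x s c : W} (P : S.Walk x s)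
    (hc : c ∈ P.support) (hcx : c ≠ x) :
    (P.takeUntil c hc).getVert 1 = P.getVert 1 := by
  have hspec := P.take_spec hc
  have hlen : 0 < (P.takeUntil c hc).length := by
    rcases Nat.eq_zero_or_pos (P.takeUntil c hc).length with h | h
    · exact absurd (SimpleGraph.Walk.eq_of_length_eq_zero h).symm hcx
    · exact h
  conv_rhs => rw [← hspec]
  rw [SimpleGraph.Walk.getVert_append]
  rcases Nat.lt_or_ge 1 (P.takeUntil c hc).length with h | h
  · simp [h]
  · have h1 : (P.takeUntil c hc).length = 1 := by omega
    rw [if_neg (by omega)]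
    have : (P.takeUntil c hc).getVert 1 = c := by
      conv_lhs => rw [← h1]
      exact SimpleGraph.Walk.getVert_length _
    rw [this, h1]
    simp [SimpleGraph.Walk.getVert_zero]

lemma append_isPath [DecidableEq W] {S : SimpleGraph W} (hS : S.IsAcyclic) {x s t : W}
    (P : S.Walk x s) (Q : S.Walk x t) (hP : P.IsPath) (hQ : Q.IsPath)
    (hne : P.getVert 1 ≠ Q.getVert 1) : (P.reverse.append Q).IsPath := by
  have key : ∀ c ∈ P.support, c ∈ Q.support → c = x := by
    intro c hc1 hc2
    by_contra hcx
    have hP1 : (P.takeUntil c hc1).IsPath := hP.takeUntil hc1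
    have hQ1 : (Q.takeUntil c hc2).IsPath := hQ.takeUntil hc2
    have huniq : ∀ (p q : S.Path x c), p = q := fun p q =>
      (isAcyclic_iff_path_unique.mp hS) p q
    have h' := huniq ⟨P.takeUntil c hc1, hP1⟩ ⟨Q.takeUntil c hc2, hQ1⟩
    have heq : P.takeUntil c hc1 = Q.takeUntil c hc2 := congrArg Subtype.val h'
    apply hne
    rw [← getVert_one_takeUntil P hc1 hcx, ← getVert_one_takeUntil Q hc2 hcx, heq]
  rw [SimpleGraph.Walk.isPath_def, SimpleGraph.Walk.support_append]
  rw [List.nodup_append]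
  refine ⟨?_, ?_, ?_⟩
  · rw [SimpleGraph.Walk.support_reverse]
    exact List.nodup_reverse.mpr hP.support_nodup
  · exact hQ.support_nodup.tail
  · intro c hcP b hcQ hcb
    subst hcb
    rw [SimpleGraph.Walk.support_reverse, List.mem_reverse] at hcP
    have hcQ' : c ∈ Q.support := List.mem_of_mem_tail hcQ
    have hcx : c = x := key c hcP hcQ'
    subst hcx
    have hnd := hQ.support_nodup
    rw [Q.support_eq_cons] at hnd
    exact (List.nodup_cons.mp hnd).1 hcQ

lemma dist_getVert_one_le {S : SimpleGraph W} [DecidableEq W] {x s : W} (P : S.Walk x s)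
    (hnil : 0 < P.length) : P.getVert 1 ∈ P.support ∧
      S.dist (P.getVert 1) s + 1 ≤ P.length ∧ S.Adj x (P.getVert 1) := by
  have hadj : S.Adj x (P.getVert 1) := by
    have := P.adj_getVert_succ hnil
    rwa [P.getVert_zero] at this
  have hmem : P.getVert 1 ∈ P.support :=
    SimpleGraph.Walk.mem_support_iff_exists_getVert.mpr ⟨1, rfl, hnil⟩
  refine ⟨hmem, ?_, hadj⟩
  have hsplit := congrArg SimpleGraph.Walk.length (P.take_spec hmem)
  rw [SimpleGraph.Walk.length_append] at hsplit
  have h1 : 1 ≤ (P.takeUntil _ hmem).length := by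
    rcases Nat.eq_zero_or_pos (P.takeUntil _ hmem).length with h | h
    · exact absurd (SimpleGraph.Walk.eq_of_length_eq_zero h) hadj.ne
    · exact h
  have h2 : S.dist (P.getVert 1) s ≤ (P.dropUntil _ hmem).length :=
    SimpleGraph.dist_le _
  omega

/-- The gate property of nearest-point projection to the image of an isometric
tree embedding. -/
lemma gate [DecidableEq W] {T : SimpleGraph V} {S : SimpleGraph W}
    (hT : T.IsTree) (hS : S.IsTree) (g : T →g S)
    (hg : ∀ u w : V, S.dist (g u) (g w) = T.dist u w) (v y : V) :
    ∀ (n : ℕ) (x : W), S.dist x (g y) + S.dist x (g v) ≤ n →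
      (∀ z : V, S.dist x (g y) ≤ S.dist x (g z)) →
      S.dist (g v) (g y) ≤ S.dist (g v) x := by
  intro n
  induction n using Nat.strong_induction_on with
  | _ n ih =>
    intro x hn hmin
    by_cases h0 : S.dist x (g y) = 0
    · have hx : x = g y := (hS.isConnected.dist_eq_zero_iff).mp h0
      rw [hx]
    · have hxr : x ∉ Set.range g := by
        rintro ⟨z, rfl⟩
        exact h0 (Nat.le_zero.mp (by simpa [SimpleGraph.dist_self] using hmin z))
      have h0v : S.dist x (g v) ≠ 0 := by
        intro h
        exact hxr ⟨v, ((hS.isConnected.dist_eq_zero_iff).mp h).symm⟩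
      obtain ⟨P, hP, hPlen⟩ := hS.isConnected.exists_path_of_dist x (g y)
      obtain ⟨Q, hQ, hQlen⟩ := hS.isConnected.exists_path_of_dist x (g v)
      have hPnil : 0 < P.length := by omega
      have hQnil : 0 < Q.length := by omega
      by_cases hab : P.getVert 1 = Q.getVert 1
      · -- same first step: recurse at a
        obtain ⟨hmemP, hdy, hadj⟩ := dist_getVert_one_le P hPnil
        obtain ⟨hmemQ, hdv, -⟩ := dist_getVert_one_le Q hQnil
        set a := P.getVert 1 with ha
        rw [← hab] at hdv
        rw [hPlen] at hdy
        rw [hQlen] at hdv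
        have hxa : S.dist x a = 1 := SimpleGraph.dist_eq_one_iff_adj.mpr hadj
        have hmin' : ∀ z : V, S.dist a (g y) ≤ S.dist a (g z) := by
          intro z
          have ht : S.dist x (g z) ≤ S.dist x a + S.dist a (g z) :=
            hS.isConnected.dist_triangle
          have := hmin z
          omega
        have hrec := ih (S.dist a (g y) + S.dist a (g v)) (by omega) a le_rfl hmin'
        have hfin : S.dist (g v) a ≤ S.dist x (g v) - 1 := by
          rw [SimpleGraph.dist_comm]; omega
        calc S.dist (g v) (g y) ≤ S.dist (g v) a := hrec
          _ ≤ S.dist (g v) x := by rw [SimpleGraph.dist_comm (v := x)]; omega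
      · exfalso
        have hpath := append_isPath hS.IsAcyclic P Q hP hQ hab
        have hx : x ∈ (P.reverse.append Q).support := by
          apply SimpleGraph.Walk.subset_support_append_left
          rw [SimpleGraph.Walk.support_reverse, List.mem_reverse]
          exact P.start_mem_support
        exact hxr (convex_range hT hS g hg _ hpath x hx)

def liftWalk {G : SimpleGraph V} {s : Set V} :
    ∀ {u w : V} (p : G.Walk u w) (hu : u ∈ s) (hw : w ∈ s),
      (∀ c ∈ p.support, c ∈ s) → (G.induce s).Walk ⟨u, hu⟩ ⟨w, hw⟩
  | _, _, SimpleGraph.Walk.nil, _, _, _ => SimpleGraph.Walk.nil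
  | u, w, SimpleGraph.Walk.cons h p, hu, hw, hs =>
    SimpleGraph.Walk.cons (v := ⟨_, hs _ (by simp)⟩) (by exact h)
      (liftWalk p _ hw fun c hc => hs c (by simp [hc]))

def inducedHom (G : SimpleGraph V) (s : Set V) : (G.induce s) →g G :=
  ⟨Subtype.val, fun h => h⟩

lemma interior_not_leaf {G : SimpleGraph V} {L : Set V}
    (hL : ∀ v ∈ L, (G.neighborSet v).ncard = 1) {u w : V} (hu : u ∉ L) (hw : w ∉ L)
    (p : G.Walk u w) (hp : p.IsPath) : ∀ c ∈ p.support, c ∉ L := by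
  intro c hc hcL
  obtain ⟨i, hgv, hi⟩ := SimpleGraph.Walk.mem_support_iff_exists_getVert.mp hc
  have hi0 : i ≠ 0 := by rintro rfl; rw [p.getVert_zero] at hgv; exact hu (hgv ▸ hcL)
  have hil : i ≠ p.length := by
    rintro rfl; rw [p.getVert_length] at hgv; exact hw (hgv ▸ hcL)
  have hlt : i < p.length := lt_of_le_of_ne hi hil
  have h1 : G.Adj (p.getVert (i-1)) c := by
    have := p.adj_getVert_succ (i := i-1) (by omega)
    rwa [Nat.sub_add_cancel (by omega), hgv] at this
  have h2 : G.Adj c (p.getVert (i+1)) := by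
    have := p.adj_getVert_succ (i := i) hlt
    rwa [hgv] at this
  have hne : p.getVert (i-1) ≠ p.getVert (i+1) := by
    intro h
    have := getVert_injOn_aux p hp (i-1) (i+1) (by omega) (by omega) h
    omega
  obtain ⟨a, ha⟩ := Set.ncard_eq_one.mp (hL c hcL)
  have m1 : p.getVert (i-1) ∈ G.neighborSet c := h1.symm
  have m2 : p.getVert (i+1) ∈ G.neighborSet c := h2
  rw [ha, Set.mem_singleton_iff] at m1 m2
  exact hne (m1.trans m2.symm)

lemma leaf_neighbor {G : SimpleGraph V} (hG : G.IsTree) {L : Set V}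
    (hL : ∀ v ∈ L, (G.neighborSet v).ncard = 1) (hLc : (Lᶜ : Set V).Nonempty)
    {v : V} (hv : v ∈ L) : ∃ u, G.Adj v u ∧ u ∉ L := by
  obtain ⟨a, ha⟩ := Set.ncard_eq_one.mp (hL v hv)
  have hadj : G.Adj v a := by
    have : a ∈ G.neighborSet v := by rw [ha]; exact Set.mem_singleton a
    exact this
  refine ⟨a, hadj, ?_⟩
  intro haL
  obtain ⟨b, hb⟩ := Set.ncard_eq_one.mp (hL a haL)
  have hvb : v = b := by
    have : v ∈ G.neighborSet a := hadj.symm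
    rwa [hb, Set.mem_singleton_iff] at this
  obtain ⟨t, ht⟩ := hLc
  have htv : t ≠ v := fun h => ht (h ▸ hv)
  have hta : t ≠ a := fun h => ht (h ▸ haL)
  obtain ⟨p, hp, hplen⟩ := hG.isConnected.exists_path_of_dist v t
  have hlen1 : 0 < p.length := by
    rcases Nat.eq_zero_or_pos p.length with h | h
    · exact absurd (SimpleGraph.Walk.eq_of_length_eq_zero h).symm htv
    · exact h
  have h1 : p.getVert 1 = a := by
    have h' := p.adj_getVert_succ (i := 0) hlen1
    rw [p.getVert_zero] at h'
    have : p.getVert 1 ∈ G.neighborSet v := h'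
    rwa [ha, Set.mem_singleton_iff] at this
  have hlen2 : 1 < p.length := by
    rcases Nat.lt_or_ge 1 p.length with h | h
    · exact h
    · exfalso
      have hl1 : p.length = 1 := by omega
      have : p.getVert 1 = t := by rw [← hl1]; exact p.getVert_length
      rw [this] at h1; exact hta h1
  have h2 : p.getVert 2 = v := by
    have h' := p.adj_getVert_succ (i := 1) hlen2
    rw [h1] at h'
    have : p.getVert 2 ∈ G.neighborSet a := h'
    rw [hb, Set.mem_singleton_iff] at this
    rw [this, ← hvb]
  have := getVert_injOn_aux p hp 0 2 (by omega) (by omega)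
    (by rw [p.getVert_zero, h2])
  omega

lemma part2 (V W : Type) [Fintype V] [Fintype W] (T : SimpleGraph V) (S : SimpleGraph W)
    (hT : T.IsTree) (hS : S.IsTree) (f : V ↪ W)
    (hf : ∀ u w : V, S.dist (f u) (f w) = T.dist u w) : burnNum T ≤ burnNum S := by
  classical
  have hVne : Nonempty V := hT.isConnected.nonempty
  have hWne : Nonempty W := hS.isConnected.nonempty
  let g : T →g S := ⟨f, by
    intro a b hab
    have h1 : T.dist a b = 1 := SimpleGraph.dist_eq_one_iff_adj.mpr hab
    exact SimpleGraph.dist_eq_one_iff_adj.mp (by rw [hf, h1])⟩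
  have hg : ∀ u w : V, S.dist (g u) (g w) = T.dist u w := hf
  obtain ⟨x, hx⟩ : ∃ x : Fin (burnNum S) → W, IsBurningSeq S x :=
    Nat.sInf_mem (burn_set_nonempty S)
  have hchoice : ∀ w : W, ∃ z : V, ∀ z' : V, S.dist w (f z) ≤ S.dist w (f z') := by
    intro w
    obtain ⟨z, -, hz⟩ := Finset.exists_min_image Finset.univ
      (fun z : V => S.dist w (f z)) ⟨Classical.arbitrary V, Finset.mem_univ _⟩
    exact ⟨z, fun z' => hz z' (Finset.mem_univ _)⟩
  choose nr hnr using hchoice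
  apply Nat.sInf_le
  refine ⟨fun i => nr (x i), ?_⟩
  intro v
  obtain ⟨i, hi⟩ := hx (f v)
  refine ⟨i, le_trans ?_ hi⟩
  have hgate : S.dist (g v) (g (nr (x i))) ≤ S.dist (g v) (x i) :=
    gate hT hS g hg v (nr (x i)) _ (x i) le_rfl (hnr (x i))
  rw [hg] at hgate
  exact hgate

lemma part1 (V : Type) [Fintype V] [DecidableEq V] (T : SimpleGraph V) (hT : T.IsTree)
    (L : Set V) (hL : ∀ v ∈ L, (T.neighborSet v).ncard = 1) (hLc : (Lᶜ : Set V).Nonempty) :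
    burnNum T ≤ burnNum (T.induce (Lᶜ : Set V)) + 1 := by
  classical
  set T' := T.induce (Lᶜ : Set V) with hT'
  have hne : Nonempty (Lᶜ : Set V) := hLc.to_subtype
  set k := burnNum T' with hk
  obtain ⟨x, hx⟩ : ∃ x : Fin k → (Lᶜ : Set V), IsBurningSeq T' x :=
    Nat.sInf_mem (burn_set_nonempty T')
  have hdist : ∀ u w : (Lᶜ : Set V), T.dist u.1 w.1 ≤ T'.dist u w := by
    intro u w
    have hreach : T'.Reachable u w := by
      obtain ⟨p, hp, -⟩ := hT.isConnected.exists_path_of_dist u.1 w.1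
      have hsupp : ∀ c ∈ p.support, c ∈ (Lᶜ : Set V) :=
        interior_not_leaf hL u.2 w.2 p hp
      exact ⟨liftWalk p u.2 w.2 hsupp⟩
    obtain ⟨q, hqlen⟩ := hreach.exists_walk_length_eq_dist
    calc T.dist u.1 w.1 ≤ (q.map (inducedHom T (Lᶜ : Set V))).length :=
          SimpleGraph.dist_le _
      _ = T'.dist u w := by rw [SimpleGraph.Walk.length_map, hqlen]
  have hk1 : 1 ≤ k := by
    obtain ⟨u0⟩ := hne
    obtain ⟨i, -⟩ := hx u0
    exact i.pos
  apply Nat.sInf_le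
  refine ⟨fun j => if h : (j : ℕ) < k then (x ⟨j, h⟩ : V) else (hLc.choose : V), ?_⟩
  intro v
  by_cases hvL : v ∈ L
  · obtain ⟨u, hadj, huL⟩ := leaf_neighbor hT hL hLc hvL
    obtain ⟨i, hi⟩ := hx ⟨u, huL⟩
    have hik : (i : ℕ) < k := i.isLt
    refine ⟨⟨i, by omega⟩, ?_⟩
    simp only [hik, dif_pos, Fin.eta]
    have h1 : T.dist v (x i : V) ≤ 1 + T.dist u (x i : V) := by
      have htri : T.dist v (x i : V) ≤ T.dist v u + T.dist u (x i : V) :=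
        hT.isConnected.dist_triangle
      have hd1 : T.dist v u = 1 := SimpleGraph.dist_eq_one_iff_adj.mpr hadj
      omega
    have h2 : T.dist u (x i : V) ≤ T'.dist ⟨u, huL⟩ (x i) := hdist ⟨u, huL⟩ (x i)
    omega
  · obtain ⟨i, hi⟩ := hx ⟨v, hvL⟩
    have hik : (i : ℕ) < k := i.isLt
    refine ⟨⟨i, by omega⟩, ?_⟩
    simp only [hik, dif_pos, Fin.eta]
    have h2 : T.dist v (x i : V) ≤ T'.dist ⟨v, hvL⟩ (x i) := hdist ⟨v, hvL⟩ (x i)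
    omega

end Aux

/-- (1) Deleting a set of leaves from a tree increases the burning number by at most 1
upon restoring them; (2) more generally, if a tree T embeds isometrically into a tree S
then b(T) ≤ b(S). -/
theorem burnNum_delete_leaves_and_isometric :
    (∀ (V : Type) [Fintype V] [DecidableEq V] (T : SimpleGraph V),
      T.IsTree → ∀ L : Set V, (∀ v ∈ L, (T.neighborSet v).ncard = 1) →
        (Lᶜ : Set V).Nonempty →
        burnNum T ≤ burnNum (T.induce (Lᶜ : Set V)) + 1) ∧
    (∀ (V W : Type) [Fintype V] [Fintype W]
      (T : SimpleGraph V) (S : SimpleGraph W),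
      T.IsTree → S.IsTree → ∀ f : V ↪ W,
        (∀ u w : V, S.dist (f u) (f w) = T.dist u w) →
        burnNum T ≤ burnNum S) := by
  constructor
  · intro V _ _ T hT L hL hLc
    exact part1 V T hT L hL hLc
  · intro V W _ _ T S hT hS f hf
    exact part2 V W T S hT hS f hf
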